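/- Assume (H1)–(H5). Let C > 0, 0 < η < η₀, and 0 < ε ≤ η^q, and let v ∈ V satisfy I^ε(v) ≤ C. Then there exist constants R_* > 0 (depending only on the data of W) and R^* > 0 (depending only on C and the data of W) with the following property. Let (y⁻,y⁺) ⊂ (0,1) be an L-interval for v with associated D-interval (x⁻,x⁺), and set α = Leb({x ∈ (x⁻,x⁺) : |v′(x) − z₂| ≤ η}) and β = Leb({x ∈ (x⁻,x⁺) : |v′(x) − z₃| ≤ η}). If max{α,β} ≥ R^* ε or max{α,β} ≤ R_* ε, then ∫_{y⁻}^{y⁺} (ε⁴ v″² + ε^{−2}W(v′) + ε^{−2}v²) dx ≥ A₀ α + B₀ β. -/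

import Mathlib

open MeasureTheory Set Filter

/-- `u ∈ V = H²(0,1) ∩ W^{1,p}₀(0,1)`, represented through its first and second
derivatives `u'`, `u''`: `u(0) = u(1) = 0`, `u` and `u'` are absolutely continuous on
`[0,1]`, `u' ∈ L^p(0,1)` and `u'' ∈ L²(0,1)`. -/
def MemV (p : ℝ) (u u' u'' : ℝ → ℝ) : Prop :=
  u 0 = 0 ∧ u 1 = 0 ∧
  (∀ x ∈ Set.Icc (0:ℝ) 1, u x = ∫ t in (0:ℝ)..x, u' t) ∧
  (∀ x ∈ Set.Icc (0:ℝ) 1, u' x = u' 0 + ∫ t in (0:ℝ)..x, u'' t) ∧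
  IntervalIntegrable u' volume 0 1 ∧
  IntervalIntegrable u'' volume 0 1 ∧
  IntervalIntegrable (fun x => |u' x| ^ p) volume 0 1 ∧
  IntervalIntegrable (fun x => (u'' x) ^ 2) volume 0 1

/-- The rescaled energy `I^ε(u) = ∫₀¹ (ε⁴ u''² + ε⁻² W(u') + ε⁻² u²) dx`. -/
noncomputable def Ieps (W : ℝ → ℝ) (ε : ℝ) (u u' u'' : ℝ → ℝ) : ℝ :=
  ∫ x in (0:ℝ)..1,
    (ε ^ 4 * (u'' x) ^ 2 + (ε ^ 2)⁻¹ * W (u' x) + (ε ^ 2)⁻¹ * (u x) ^ 2)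

/-- Hypotheses (H1)–(H5) on the three–well potential `W`. -/
structure HypW (W : ℝ → ℝ) (p q c₀ c₁ c₂ c₃ η₀ z₁ z₂ z₃ : ℝ) : Prop where
  cont : Continuous W
  nonneg : ∀ s, 0 ≤ W s
  hp : 1 < p
  hc₁ : 0 < c₁
  hc₂ : 0 < c₂
  hc₃ : 0 < c₃
  lb : ∀ s, c₁ * |s| ^ p - c₂ ≤ W s
  ub : ∀ s, W s ≤ c₃ * (|s| ^ p + 1)
  hz₁ : z₁ < 0
  hz₂ : 0 < z₂
  hz₂₃ : z₂ < z₃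
  zeroSet : ∀ s, W s = 0 ↔ (s = z₁ ∨ s = z₂ ∨ s = z₃)
  hη₀pos : 0 < η₀
  hη₀lt : η₀ < min 1 (min (-z₁) (min z₂ ((z₃ - z₂) / 2)))
  hc₀ : 0 < c₀
  hq : 0 < q
  coer : ∀ s,
    c₀ * min (min (|s - z₁| ^ q) (min (|s - z₂| ^ q) (|s - z₃| ^ q))) (η₀ ^ q) ≤ W s

/-- The volume fraction `λ^η(v)` at the well `z`:
the Lebesgue measure of `{x ∈ (0,1) : |v'(x) − z| ≤ η}`. -/
noncomputable def lamEta (v' : ℝ → ℝ) (z η : ℝ) : ℝ :=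
  (volume {x : ℝ | x ∈ Set.Ioo (0:ℝ) 1 ∧ |v' x - z| ≤ η}).toReal

/-- `E₀`-type constant: `2∫_{a}^{b} √(W(s)) ds`. -/
noncomputable def cE (W : ℝ → ℝ) (a b : ℝ) : ℝ := 2 * ∫ s in a..b, Real.sqrt (W s)

/-- The constant `A₀ = (3/2)^{2/3} E₀^{2/3} (z₂² z₂₁)^{1/3}`. -/
noncomputable def cA₀ (W : ℝ → ℝ) (z₁ z₂ : ℝ) : ℝ :=
  (3/2 : ℝ) ^ ((2:ℝ)/3) * (cE W z₁ z₂) ^ ((2:ℝ)/3) * (z₂ ^ 2 * (1 - z₂ / z₁)) ^ ((1:ℝ)/3)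

/-- The constant `B₀ = (3/2)^{2/3} (E₀+E₁)^{2/3} (z₃² z₃₁)^{1/3}`. -/
noncomputable def cB₀ (W : ℝ → ℝ) (z₁ z₂ z₃ : ℝ) : ℝ :=
  (3/2 : ℝ) ^ ((2:ℝ)/3) * (cE W z₁ z₂ + cE W z₂ z₃) ^ ((2:ℝ)/3) *
    (z₃ ^ 2 * (1 - z₃ / z₁)) ^ ((1:ℝ)/3)

/-- An `A₊^η`-transition layer on `(a,b)` for `v'`. -/
def IsAPlusLayer (v' : ℝ → ℝ) (η z₁ z₂ a b : ℝ) : Prop :=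
  a < b ∧ (∀ x ∈ Set.Ioo a b, z₁ + η < v' x ∧ v' x < z₂ - η) ∧
  v' a = z₁ + η ∧ v' b = z₂ - η

/-- An `A₋^η`-transition layer on `(a,b)` for `v'`. -/
def IsAMinusLayer (v' : ℝ → ℝ) (η z₁ z₂ a b : ℝ) : Prop :=
  a < b ∧ (∀ x ∈ Set.Ioo a b, z₁ + η < v' x ∧ v' x < z₂ - η) ∧
  v' a = z₂ - η ∧ v' b = z₁ + η

/-- `(ym, yp) ⊂ (0,1)` is an `L`-interval for `v'` with associated `D`-interval
`(xm, xp)`. -/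
def IsLInterval (v' : ℝ → ℝ) (η z₁ z₂ ym yp xm xp : ℝ) : Prop :=
  0 ≤ ym ∧ yp ≤ 1 ∧
  v' ym = z₁ + η ∧ v' yp = z₁ + η ∧
  (∀ x ∈ Set.Ioo ym yp, z₁ + η < v' x) ∧
  IsAPlusLayer v' η z₁ z₂ ym xm ∧
  IsAMinusLayer v' η z₁ z₂ xp yp ∧
  xm ≤ xp

/-- Lemma 4.3: on `L`-intervals whose volume fractions `α, β` are either very large or
very small compared with `ε`, the local energy dominates `A₀α + B₀β`. -/

private lemma amgm_aux {A B : ℝ} (hA : 0 ≤ A) (hB : 0 ≤ B) :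
    2 * Real.sqrt (A * B) ≤ A + B := by
  nlinarith [sq_nonneg (Real.sqrt A - Real.sqrt B), Real.sq_sqrt hA, Real.sq_sqrt hB,
    Real.sqrt_mul_self hA, Real.sqrt_nonneg A, Real.sqrt_nonneg B,
    Real.sqrt_mul hA B]

private lemma cs_aux {g : ℝ → ℝ} {s t : ℝ} (hst : s < t)
    (hg : IntervalIntegrable g volume s t)
    (hg2 : IntervalIntegrable (fun x => (g x)^2) volume s t) :
    (∫ x in s..t, g x)^2 / (t - s) ≤ ∫ x in s..t, (g x)^2 := by
  set Δ := ∫ x in s..t, g x with hΔ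
  set c : ℝ := Δ / (t - s) with hc
  have hl : (0:ℝ) < t - s := by linarith
  have h0 : 0 ≤ ∫ x in s..t, (g x - c)^2 :=
    intervalIntegral.integral_nonneg hst.le (fun x _ => sq_nonneg _)
  have hexp : ∀ x, (g x - c)^2 = (g x)^2 - (2*c) * g x + c^2 := by intro x; ring
  have hint : (∫ x in s..t, (g x - c)^2)
      = (∫ x in s..t, (g x)^2) - (2*c) * Δ + (t - s) * c^2 := by
    simp_rw [hexp]
    rw [intervalIntegral.integral_add (hg2.sub (hg.const_mul (2*c))) intervalIntegrable_const,
      intervalIntegral.integral_sub hg2 (hg.const_mul (2*c)),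
      intervalIntegral.integral_const_mul, intervalIntegral.integral_const,
      smul_eq_mul]
  have : (2*c) * Δ - (t-s) * c^2 ≤ ∫ x in s..t, (g x)^2 := by linarith [hint ▸ h0]
  calc Δ^2 / (t-s) = (2*c)*Δ - (t-s)*c^2 := by rw [hc]; field_simp; ring
    _ ≤ _ := this


private lemma TB_bound
    (v v' : ℝ → ℝ) (z₁ a μ : ℝ) (xm xp : ℝ)
    (hxm0 : 0 < xm) (hxp1 : xp ≤ 1)
    (hvOn : IntegrableOn v' (Icc (0:ℝ) 1) volume)
    (hvc : ContinuousOn v (Icc (0:ℝ) 1))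
    (hFTCv : ∀ u w : ℝ, u ∈ Icc (0:ℝ) 1 → w ∈ Icc (0:ℝ) 1 →
      (∫ x in u..w, v' x) = v w - v u)
    (T S B : Set ℝ) (hTmeas : MeasurableSet T) (hSmeas : MeasurableSet S)
    (hBmeas : MeasurableSet B)
    (hTsub : T ⊆ Set.Ioo xm xp) (hSsub : S ⊆ Set.Ioo xm xp)
    (hBiff : ∀ x, x ∈ Set.Ioo xm xp → (x ∈ B ↔ |v x| ≤ a*μ/16))
    (hTv' : ∀ x ∈ T, a ≤ v' x)
    (hpos : ∀ x, x ∈ Set.Ioo xm xp → x ∉ S → 0 ≤ v' x)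
    (hz₁lb : ∀ x ∈ Set.Ioo xm xp, z₁ ≤ v' x)
    (hapos : 0 < a) (hμpos : 0 < μ) (hz₁ : z₁ < 0) :
    (volume (T ∩ B)).toReal ≤ μ/8 + (-z₁)*(volume S).toReal/a := by
  have hIoosub01 : Set.Ioo xm xp ⊆ Icc (0:ℝ) 1 := fun x hx =>
    ⟨le_trans hxm0.le hx.1.le, le_trans hx.2.le hxp1⟩
  have hfinIoo : volume (Set.Ioo xm xp) < ⊤ := measure_Ioo_lt_top
  have hfin : ∀ (U : Set ℝ), U ⊆ Set.Ioo xm xp → volume U ≠ ⊤ := fun U hU =>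
    ((measure_mono hU).trans_lt hfinIoo).ne
  have hSnn : 0 ≤ (volume S).toReal := ENNReal.toReal_nonneg
  rcases eq_empty_or_nonempty (T ∩ B) with hTB | hTBne
  · rw [hTB]
    simp only [measure_empty, ENNReal.toReal_zero]
    have h1 : 0 ≤ (-z₁)*(volume S).toReal/a := by
      have hz : (0:ℝ) ≤ -z₁ := by linarith
      positivity
    linarith
  · set K := Icc xm xp ∩ (fun x => |v x|) ⁻¹' (Iic (a*μ/16)) with hKdef
    have hKclosed : IsClosed K :=
      ((hvc.mono (Icc_subset_Icc hxm0.le hxp1)).abs).preimage_isClosed_of_isClosed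
        isClosed_Icc isClosed_Iic
    have hTBK : T ∩ B ⊆ K := by
      rintro x ⟨hxT, hxB⟩
      have hxIoo := hTsub hxT
      exact ⟨⟨hxIoo.1.le, hxIoo.2.le⟩, (hBiff x hxIoo).1 hxB⟩
    have hbddB : BddBelow (T ∩ B) :=
      (bddBelow_Icc : BddBelow (Icc xm xp)).mono (hTBK.trans inter_subset_left)
    have hbddA : BddAbove (T ∩ B) :=
      (bddAbove_Icc (a := xm) (b := xp)).mono (hTBK.trans inter_subset_left)
    set u := sInf (T ∩ B) with hudef
    set w := sSup (T ∩ B) with hwdef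
    have huK : u ∈ K := hKclosed.closure_subset_iff.2 hTBK (csInf_mem_closure hTBne hbddB)
    have hwK : w ∈ K := hKclosed.closure_subset_iff.2 hTBK (csSup_mem_closure hTBne hbddA)
    have huw : u ≤ w := csInf_le_csSup hTBne hbddB hbddA
    have hu01 : u ∈ Icc (0:ℝ) 1 := ⟨le_trans hxm0.le huK.1.1, le_trans huK.1.2 hxp1⟩
    have hw01 : w ∈ Icc (0:ℝ) 1 := ⟨le_trans hxm0.le hwK.1.1, le_trans hwK.1.2 hxp1⟩
    have hvu : |v u| ≤ a*μ/16 := huK.2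
    have hvw : |v w| ≤ a*μ/16 := hwK.2
    have hTBuw : T ∩ B ⊆ Icc u w := fun x hx => ⟨csInf_le hbddB hx, le_csSup hbddA hx⟩
    have hIoouw : Set.Ioo u w ⊆ Set.Ioo xm xp := fun x hx =>
      ⟨lt_of_le_of_lt huK.1.1 hx.1, lt_of_lt_of_le hx.2 hwK.1.2⟩
    clear_value u w
    have hTBmeas : MeasurableSet (T ∩ B) := hTmeas.inter hBmeas
    have hTBsub : T ∩ B ⊆ Set.Ioo xm xp := inter_subset_left.trans hTsub
    -- (1)
    have hconst : IntegrableOn (fun _ : ℝ => a) (T ∩ B) volume :=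
      integrableOn_const ((measure_mono hTBsub).trans_lt hfinIoo).ne
    have h1 : a*(volume (T ∩ B)).toReal ≤ ∫ x in T ∩ B, v' x := by
      have := setIntegral_mono_on hconst
        (hvOn.mono_set (hTBsub.trans hIoosub01)) hTBmeas (fun x hx => hTv' x hx.1)
      rwa [setIntegral_const, smul_eq_mul, mul_comm] at this
    -- (2)
    set E := Set.Ioo u w \ (T ∩ B) with hEdef
    have hEmeas : MeasurableSet E := measurableSet_Ioo.diff hTBmeas
    have hEsub : E ⊆ Set.Ioo xm xp := diff_subset.trans hIoouw
    have hd2 : Set.Ioo u w = ((T ∩ B) ∩ Set.Ioo u w) ∪ E := by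
      rw [hEdef, Set.inter_comm]
      exact (inter_union_diff _ _).symm
    have hEdisj : Disjoint ((T ∩ B) ∩ Set.Ioo u w) E :=
      (disjoint_sdiff_self_right (x := T ∩ B) (y := Set.Ioo u w)).mono_left inter_subset_left
    clear_value E
    have hnull : volume ((T ∩ B) \ Set.Ioo u w) = 0 := by
      refine measure_mono_null (fun x hx => ?_)
        (Set.Countable.measure_zero ((countable_singleton w).insert u) volume)
      have hxIcc : x ∈ Icc u w := hTBuw hx.1
      have hor : x = u ∨ x = w := by
        by_contra hcon
        push_neg at hcon
        exact hx.2 ⟨lt_of_le_of_ne hxIcc.1 (Ne.symm hcon.1), lt_of_le_of_ne hxIcc.2 hcon.2⟩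
      rcases hor with h | h
      · exact h ▸ Set.mem_insert _ _
      · exact h ▸ Set.mem_insert_of_mem _ rfl
    have hint_eq : (∫ x in T ∩ B, v' x) = ∫ x in (T ∩ B) ∩ Set.Ioo u w, v' x := by
      have hdecomp : T ∩ B = ((T ∩ B) ∩ Set.Ioo u w) ∪ ((T ∩ B) \ Set.Ioo u w) :=
        (inter_union_diff _ _).symm
      have hzero : (∫ x in (T ∩ B) \ Set.Ioo u w, v' x) = 0 := by
        rw [Measure.restrict_eq_zero.2 hnull, integral_zero_measure]
      nth_rewrite 1 [hdecomp]
      rw [setIntegral_union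
        (disjoint_sdiff_self_right.mono_left inter_subset_right)
        (hTBmeas.diff measurableSet_Ioo)
        (hvOn.mono_set ((inter_subset_left.trans hTBsub).trans hIoosub01))
        (hvOn.mono_set ((diff_subset.trans hTBsub).trans hIoosub01)),
        hzero, add_zero]
    -- (3)
    have hElb : z₁ * (volume S).toReal ≤ ∫ x in E, v' x := by
      have hES_meas : MeasurableSet (E ∩ S) := hEmeas.inter hSmeas
      have hES'_meas : MeasurableSet (E \ S) := hEmeas.diff hSmeas
      have hintES : IntegrableOn v' (E ∩ S) volume :=
        hvOn.mono_set ((inter_subset_left.trans hEsub).trans hIoosub01)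
      have hintES' : IntegrableOn v' (E \ S) volume :=
        hvOn.mono_set ((diff_subset.trans hEsub).trans hIoosub01)
      have hsplitE : (∫ x in E, v' x) = (∫ x in E ∩ S, v' x) + ∫ x in E \ S, v' x := by
        nth_rewrite 1 [(inter_union_diff E S).symm]
        exact setIntegral_union (disjoint_sdiff_self_right.mono_left inter_subset_right)
          hES'_meas hintES hintES'
      have h31 : 0 ≤ ∫ x in E \ S, v' x :=
        setIntegral_nonneg hES'_meas (fun x hx => hpos x (hEsub hx.1) hx.2)
      have h32 : z₁ * (volume (E ∩ S)).toReal ≤ ∫ x in E ∩ S, v' x := by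
        have hconst2 : IntegrableOn (fun _ : ℝ => z₁) (E ∩ S) volume :=
          integrableOn_const
            ((measure_mono (inter_subset_left.trans hEsub)).trans_lt hfinIoo).ne
        have := setIntegral_mono_on hconst2 hintES hES_meas
          (fun x hx => hz₁lb x (hEsub hx.1))
        rwa [setIntegral_const, smul_eq_mul, mul_comm] at this
      have h33 : z₁ * (volume S).toReal ≤ z₁ * (volume (E ∩ S)).toReal := by
        refine mul_le_mul_of_nonpos_left ?_ hz₁.le
        exact ENNReal.toReal_mono (hfin _ hSsub) (measure_mono inter_subset_right)
      linarith
    -- (4)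
    have hIoovw : (∫ x in Set.Ioo u w, v' x) = v w - v u := by
      rw [← MeasureTheory.integral_Ioc_eq_integral_Ioo,
        ← intervalIntegral.integral_of_le huw, hFTCv u w hu01 hw01]
    have hsplitIoo : (∫ x in Set.Ioo u w, v' x)
        = (∫ x in (T ∩ B) ∩ Set.Ioo u w, v' x) + ∫ x in E, v' x := by
      nth_rewrite 1 [hd2]
      exact setIntegral_union hEdisj
        hEmeas
        (hvOn.mono_set ((inter_subset_left.trans hTBsub).trans hIoosub01))
        (hvOn.mono_set (hEsub.trans hIoosub01))
    have hvwvu : v w - v u ≤ a*μ/8 := by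
      have hh1 := abs_le.1 hvu
      have hh2 := abs_le.1 hvw
      linarith
    have hfinal : a*(volume (T ∩ B)).toReal ≤ a*μ/8 + (-z₁)*(volume S).toReal := by
      have hEq2 : (∫ x in (T ∩ B) ∩ Set.Ioo u w, v' x)
          = (v w - v u) - ∫ x in E, v' x := by
        rw [← hIoovw, hsplitIoo]; ring
      have := h1
      rw [hint_eq, hEq2] at this
      linarith [hElb, hvwvu]
    have hgoal : (volume (T ∩ B)).toReal ≤ (a*μ/8 + (-z₁)*(volume S).toReal)/a := by
      rw [le_div_iff₀ hapos]
      linarith [hfinal]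
    calc (volume (T ∩ B)).toReal ≤ (a*μ/8 + (-z₁)*(volume S).toReal)/a := hgoal
      _ = μ/8 + (-z₁)*(volume S).toReal/a := by field_simp

set_option maxHeartbeats 2000000 in
theorem statement8
    (W : ℝ → ℝ) (p q c₀ c₁ c₂ c₃ η₀ z₁ z₂ z₃ : ℝ)
    (hW : HypW W p q c₀ c₁ c₂ c₃ η₀ z₁ z₂ z₃) :
    ∃ Rlow : ℝ, 0 < Rlow ∧
      ∀ C : ℝ, 0 < C →
        ∃ Rhigh : ℝ, 0 < Rhigh ∧
          ∀ η ε : ℝ, ∀ v v' v'' : ℝ → ℝ,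
            0 < η → η < η₀ → 0 < ε → ε ≤ η ^ q →
            MemV p v v' v'' → Ieps W ε v v' v'' ≤ C →
            ∀ ym yp xm xp : ℝ, IsLInterval v' η z₁ z₂ ym yp xm xp →
              max ((volume {x : ℝ | x ∈ Set.Ioo xm xp ∧ |v' x - z₂| ≤ η}).toReal)
                  ((volume {x : ℝ | x ∈ Set.Ioo xm xp ∧ |v' x - z₃| ≤ η}).toReal)
                  ≥ Rhigh * ε ∨
              max ((volume {x : ℝ | x ∈ Set.Ioo xm xp ∧ |v' x - z₂| ≤ η}).toReal)
                  ((volume {x : ℝ | x ∈ Set.Ioo xm xp ∧ |v' x - z₃| ≤ η}).toReal)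
                  ≤ Rlow * ε →
              cA₀ W z₁ z₂ *
                  (volume {x : ℝ | x ∈ Set.Ioo xm xp ∧ |v' x - z₂| ≤ η}).toReal
                + cB₀ W z₁ z₂ z₃ *
                  (volume {x : ℝ | x ∈ Set.Ioo xm xp ∧ |v' x - z₃| ≤ η}).toReal
                ≤ ∫ x in ym..yp,
                    (ε ^ 4 * (v'' x) ^ 2 + (ε ^ 2)⁻¹ * W (v' x) + (ε ^ 2)⁻¹ * (v x) ^ 2) := by

  classical
  have hη₀m := hW.hη₀lt
  rw [lt_min_iff, lt_min_iff, lt_min_iff] at hη₀m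
  have hη₀1 := hη₀m.1
  have hη₀z₁ := hη₀m.2.1
  have hη₀z₂ := hη₀m.2.2.1
  have hη₀z₂₃ := hη₀m.2.2.2
  set a := z₂ - η₀ with ha
  have hapos : 0 < a := by simp only [ha]; linarith
  set Δ := z₂ - z₁ - 2*η₀ with hΔdef
  have hΔpos : 0 < Δ := by simp only [hΔdef]; linarith
  set w₀ := c₀ * η₀ ^ q with hw₀def
  have hw₀pos : 0 < w₀ := mul_pos hW.hc₀ (Real.rpow_pos_of_pos hW.hη₀pos q)
  have hcEnn : ∀ z z' : ℝ, z ≤ z' → 0 ≤ cE W z z' := by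
    intro z z' hzz'
    exact mul_nonneg (by norm_num)
      (intervalIntegral.integral_nonneg hzz' (fun x _ => Real.sqrt_nonneg _))
  set A₀ := cA₀ W z₁ z₂ with hA₀def
  set B₀ := cB₀ W z₁ z₂ z₃ with hB₀def
  have hA₀ : 0 ≤ A₀ := by
    refine mul_nonneg (mul_nonneg (Real.rpow_nonneg (by norm_num) _)
      (Real.rpow_nonneg (hcEnn _ _ (by linarith [hW.hz₁, hW.hz₂])) _)) (Real.rpow_nonneg ?_ _)
    have : z₂ / z₁ ≤ 0 := div_nonpos_of_nonneg_of_nonpos hW.hz₂.le hW.hz₁.le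
    nlinarith [sq_nonneg z₂]
  have hB₀ : 0 ≤ B₀ := by
    refine mul_nonneg (mul_nonneg (Real.rpow_nonneg (by norm_num) _)
      (Real.rpow_nonneg (add_nonneg (hcEnn _ _ (by linarith [hW.hz₁, hW.hz₂]))
        (hcEnn _ _ hW.hz₂₃.le)) _)) (Real.rpow_nonneg ?_ _)
    have : z₃ / z₁ ≤ 0 := div_nonpos_of_nonneg_of_nonpos (by linarith [hW.hz₂, hW.hz₂₃]) hW.hz₁.le
    nlinarith [sq_nonneg z₃]
  refine ⟨2*Δ*Real.sqrt w₀/(A₀+B₀+1), by positivity, ?_⟩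
  intro C hC
  refine ⟨max (8*(-z₁)*C/(c₀*a)) (32*(Real.sqrt (A₀+B₀)+1)/a), ?_, ?_⟩
  · refine lt_max_iff.2 (Or.inr ?_)
    have : (0:ℝ) < Real.sqrt (A₀+B₀) + 1 := by positivity
    positivity
  intro η ε v v' v'' hη hηη₀ hε hεη hV hIC ym yp xm xp hL hbr
  obtain ⟨hv0, hv1, hvF, hv'F, hv'int, hv''int, hv'pint, hv''2int⟩ := hV
  obtain ⟨hym0, hyp1, hv'ym, hv'yp, hLint, hAp, hAm, hxmxp⟩ := hL
  obtain ⟨hymxm, hApint, hApa, hApb⟩ := hAp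
  obtain ⟨hxpyp, hAmint, hAma, hAmb⟩ := hAm
  have hxm0 : 0 < xm := lt_of_le_of_lt hym0 hymxm
  have hxp1 : xp ≤ 1 := le_trans hxpyp.le hyp1
  have hymyp : ym < yp := by linarith
  -- continuity of v' and v on [0,1]
  have hv''On : IntegrableOn v'' (Icc (0:ℝ) 1) volume := by
    rwa [intervalIntegrable_iff_integrableOn_Icc_of_le (by norm_num : (0:ℝ) ≤ 1)] at hv''int
  have hv'c : ContinuousOn v' (Icc (0:ℝ) 1) := by
    have h1 : ContinuousOn (fun x => v' 0 + ∫ t in (0:ℝ)..x, v'' t) (Icc (0:ℝ) 1) := by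
      refine (continuousOn_const.add ?_)
      have := intervalIntegral.continuousOn_primitive_interval
        (f := v'') (a := (0:ℝ)) (b := 1) (μ := volume) ?_
      · rwa [uIcc_of_le (by norm_num : (0:ℝ) ≤ 1)] at this
      · rwa [uIcc_of_le (by norm_num : (0:ℝ) ≤ 1)]
    exact h1.congr (fun x hx => hv'F x hx) |>.mono (by exact subset_rfl)
  have hv'On : IntegrableOn v' (Icc (0:ℝ) 1) volume := by
    rwa [intervalIntegrable_iff_integrableOn_Icc_of_le (by norm_num : (0:ℝ) ≤ 1)] at hv'int
  have hvc : ContinuousOn v (Icc (0:ℝ) 1) := by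
    have h1 : ContinuousOn (fun x => ∫ t in (0:ℝ)..x, v' t) (Icc (0:ℝ) 1) := by
      have := intervalIntegral.continuousOn_primitive_interval
        (f := v') (a := (0:ℝ)) (b := 1) (μ := volume) ?_
      · rwa [uIcc_of_le (by norm_num : (0:ℝ) ≤ 1)] at this
      · rwa [uIcc_of_le (by norm_num : (0:ℝ) ≤ 1)]
    exact h1.congr (fun x hx => hvF x hx)
  have hWvc : ContinuousOn (fun x => W (v' x)) (Icc (0:ℝ) 1) :=
    hW.cont.comp_continuousOn hv'c
  have hv2c : ContinuousOn (fun x => (v x)^2) (Icc (0:ℝ) 1) := hvc.pow 2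
  have hsub : ∀ u w : ℝ, u ∈ Icc (0:ℝ) 1 → w ∈ Icc (0:ℝ) 1 → uIcc u w ⊆ Icc (0:ℝ) 1 := by
    intro u w hu hw
    exact uIcc_subset_Icc hu hw
  have hFTCv : ∀ u w : ℝ, u ∈ Icc (0:ℝ) 1 → w ∈ Icc (0:ℝ) 1 →
      (∫ x in u..w, v' x) = v w - v u := by
    intro u w hu hw
    rw [hvF u hu, hvF w hw]
    have hw2 : IntervalIntegrable v' volume 0 w := hv'int.mono_set
      (by rw [uIcc_of_le (by norm_num : (0:ℝ)≤1)]; exact hsub 0 w (by norm_num) hw)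
    have hu2 : IntervalIntegrable v' volume 0 u := hv'int.mono_set
      (by rw [uIcc_of_le (by norm_num : (0:ℝ)≤1)]; exact hsub 0 u (by norm_num) hu)
    rw [← intervalIntegral.integral_interval_sub_left hw2 hu2]
  have hFTCv' : ∀ u w : ℝ, u ∈ Icc (0:ℝ) 1 → w ∈ Icc (0:ℝ) 1 →
      (∫ x in u..w, v'' x) = v' w - v' u := by
    intro u w hu hw
    rw [hv'F u hu, hv'F w hw]
    have hw2 : IntervalIntegrable v'' volume 0 w := hv''int.mono_set
      (by rw [uIcc_of_le (by norm_num : (0:ℝ)≤1)]; exact hsub 0 w (by norm_num) hw)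
    have hu2 : IntervalIntegrable v'' volume 0 u := hv''int.mono_set
      (by rw [uIcc_of_le (by norm_num : (0:ℝ)≤1)]; exact hsub 0 u (by norm_num) hu)
    rw [← intervalIntegral.integral_interval_sub_left hw2 hu2]; ring
  set F : ℝ → ℝ := fun x => ε ^ 4 * (v'' x) ^ 2 + (ε ^ 2)⁻¹ * W (v' x) + (ε ^ 2)⁻¹ * (v x) ^ 2
    with hFdef
  have hε2 : (0:ℝ) < (ε^2)⁻¹ := by positivity
  have hFnn : ∀ x, 0 ≤ F x := by
    intro x
    have := hW.nonneg (v' x)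
    have h1 : 0 ≤ ε^4 * (v'' x)^2 := by positivity
    have h2 : 0 ≤ (ε^2)⁻¹ * W (v' x) := mul_nonneg hε2.le this
    have h3 : 0 ≤ (ε^2)⁻¹ * (v x)^2 := by positivity
    simp only [hFdef]; linarith
  have hFint : ∀ u w : ℝ, u ∈ Icc (0:ℝ) 1 → w ∈ Icc (0:ℝ) 1 →
      IntervalIntegrable F volume u w := by
    intro u w hu hw
    have h1 : IntervalIntegrable (fun x => (v'' x)^2) volume u w :=
      hv''2int.mono_set (by rw [uIcc_of_le (by norm_num : (0:ℝ)≤1)]; exact hsub u w hu hw)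
    have h2 : IntervalIntegrable (fun x => W (v' x)) volume u w :=
      (hWvc.mono (hsub u w hu hw)).intervalIntegrable
    have h3 : IntervalIntegrable (fun x => (v x)^2) volume u w :=
      (hv2c.mono (hsub u w hu hw)).intervalIntegrable
    exact ((h1.const_mul _).add (h2.const_mul _)).add (h3.const_mul _)
  have hymIcc : ym ∈ Icc (0:ℝ) 1 := ⟨hym0, by linarith⟩
  have hypIcc : yp ∈ Icc (0:ℝ) 1 := ⟨by linarith, hyp1⟩
  have hrestrict : ∀ s t : ℝ, ym ≤ s → s ≤ t → t ≤ yp →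
      (∫ x in s..t, F x) ≤ ∫ x in ym..yp, F x := by
    intro s t h1 h2 h3
    have hs : s ∈ Icc (0:ℝ) 1 := ⟨by linarith, by linarith⟩
    have ht : t ∈ Icc (0:ℝ) 1 := ⟨by linarith, by linarith⟩
    have e1 : (∫ x in ym..s, F x) + ∫ x in s..t, F x = ∫ x in ym..t, F x :=
      intervalIntegral.integral_add_adjacent_intervals (hFint ym s hymIcc hs) (hFint s t hs ht)
    have e2 : (∫ x in ym..t, F x) + ∫ x in t..yp, F x = ∫ x in ym..yp, F x :=
      intervalIntegral.integral_add_adjacent_intervals (hFint ym t hymIcc ht) (hFint t yp ht hypIcc)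
    have p1 : 0 ≤ ∫ x in ym..s, F x :=
      intervalIntegral.integral_nonneg h1 (fun x _ => hFnn x)
    have p2 : 0 ≤ ∫ x in t..yp, F x :=
      intervalIntegral.integral_nonneg h3 (fun x _ => hFnn x)
    linarith
  have hIC' : (∫ x in (0:ℝ)..1, F x) ≤ C := hIC
  have hWC : (∫ x in (0:ℝ)..1, W (v' x)) ≤ C * ε^2 := by
    have h2 : IntervalIntegrable (fun x => W (v' x)) volume 0 1 :=
      (hWvc.mono (hsub 0 1 (by simp) (by simp))).intervalIntegrable
    have hmono : (∫ x in (0:ℝ)..1, (ε^2)⁻¹ * W (v' x)) ≤ ∫ x in (0:ℝ)..1, F x := by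
      refine intervalIntegral.integral_mono_on (by norm_num) (h2.const_mul _)
        (hFint 0 1 (by simp) (by simp)) (fun x _ => ?_)
      have h1 : 0 ≤ ε^4 * (v'' x)^2 := by positivity
      have h3 : 0 ≤ (ε^2)⁻¹ * (v x)^2 := by positivity
      simp only [hFdef]; linarith
    rw [intervalIntegral.integral_const_mul] at hmono
    have := le_trans hmono hIC'
    calc (∫ x in (0:ℝ)..1, W (v' x)) = ε^2 * ((ε^2)⁻¹ * ∫ x in (0:ℝ)..1, W (v' x)) := by
          field_simp
      _ ≤ ε^2 * C := by
          refine mul_le_mul_of_nonneg_left this (by positivity)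
      _ = C * ε^2 := by ring
  have hWlb : ∀ (s r : ℝ), 0 ≤ r → r ≤ η₀ → r ≤ |s - z₁| → r ≤ |s - z₂| → r ≤ |s - z₃| →
      c₀ * r ^ q ≤ W s := by
    intro s r hr hrη₀ h1 h2 h3
    refine le_trans ?_ (hW.coer s)
    refine mul_le_mul_of_nonneg_left ?_ hW.hc₀.le
    have e1 : r ^ q ≤ |s-z₁| ^ q := Real.rpow_le_rpow hr h1 hW.hq.le
    have e2 : r ^ q ≤ |s-z₂| ^ q := Real.rpow_le_rpow hr h2 hW.hq.le
    have e3 : r ^ q ≤ |s-z₃| ^ q := Real.rpow_le_rpow hr h3 hW.hq.le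
    have e4 : r ^ q ≤ η₀ ^ q := Real.rpow_le_rpow hr hrη₀ hW.hq.le
    exact le_min (le_min e1 (le_min e2 e3)) e4
  have hmaxnn : 0 ≤ max ((volume {x : ℝ | x ∈ Set.Ioo xm xp ∧ |v' x - z₂| ≤ η}).toReal)
      ((volume {x : ℝ | x ∈ Set.Ioo xm xp ∧ |v' x - z₃| ≤ η}).toReal) :=
    le_max_of_le_left ENNReal.toReal_nonneg
  rcases hbr with hbig | hsmall
  · -- BIG branch
    set α := (volume {x : ℝ | x ∈ Set.Ioo xm xp ∧ |v' x - z₂| ≤ η}).toReal with hαdef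
    set β := (volume {x : ℝ | x ∈ Set.Ioo xm xp ∧ |v' x - z₃| ≤ η}).toReal with hβdef
    set μ := max α β with hμdef
    have hαnn : 0 ≤ α := ENNReal.toReal_nonneg
    have hβnn : 0 ≤ β := ENNReal.toReal_nonneg
    set R₁ := 8*(-z₁)*C/(c₀*a) with hR₁def
    set R₂ := 32*(Real.sqrt (A₀+B₀)+1)/a with hR₂def
    have hR₂pos : 0 < R₂ := by
      have : (0:ℝ) < Real.sqrt (A₀+B₀) + 1 := by positivity
      positivity
    have hμR₁ : R₁ * ε ≤ μ :=
      le_trans (mul_le_mul_of_nonneg_right (le_max_left R₁ R₂) hε.le) hbig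
    have hμR₂ : R₂ * ε ≤ μ :=
      le_trans (mul_le_mul_of_nonneg_right (le_max_right R₁ R₂) hε.le) hbig
    have hμpos : 0 < μ := lt_of_lt_of_le (mul_pos hR₂pos hε) hμR₂
    -- sets
    set T₂ := {x : ℝ | x ∈ Set.Ioo xm xp ∧ |v' x - z₂| ≤ η} with hT₂def
    set T₃ := {x : ℝ | x ∈ Set.Ioo xm xp ∧ |v' x - z₃| ≤ η} with hT₃def
    set S := {x : ℝ | x ∈ Set.Ioo xm xp ∧ v' x ≤ 0} with hSdef
    set B := {x : ℝ | x ∈ Set.Ioo xm xp ∧ |v x| ≤ a*μ/16} with hBdef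
    have hIoosub01 : Set.Ioo xm xp ⊆ Icc (0:ℝ) 1 := fun x hx =>
      ⟨le_trans hxm0.le hx.1.le, le_trans hx.2.le hxp1⟩
    have hIoosubIoc : Set.Ioo xm xp ⊆ Ioc (0:ℝ) 1 := fun x hx =>
      ⟨lt_trans hxm0 hx.1, le_trans hx.2.le hxp1⟩
    have hIoosubym : Set.Ioo xm xp ⊆ Ioo ym yp := fun x hx =>
      ⟨lt_trans hymxm hx.1, lt_of_lt_of_le hx.2 (le_trans (le_refl xp) hxpyp.le)⟩
    have hIoosubIocym : Set.Ioo xm xp ⊆ Ioc ym yp := fun x hx =>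
      ⟨(hIoosubym hx).1, (hIoosubym hx).2.le⟩
    have hmeas : ∀ (g : ℝ → ℝ), ContinuousOn g (Icc (0:ℝ) 1) → ∀ (c : Set ℝ), IsClosed c →
        MeasurableSet {x : ℝ | x ∈ Set.Ioo xm xp ∧ g x ∈ c} := by
      intro g hg c hc
      have he : {x : ℝ | x ∈ Set.Ioo xm xp ∧ g x ∈ c}
          = Set.Ioo xm xp ∩ (Icc (0:ℝ) 1 ∩ g ⁻¹' c) := by
        ext x
        constructor
        · rintro ⟨h1, h2⟩; exact ⟨h1, hIoosub01 h1, h2⟩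
        · rintro ⟨h1, _, h2⟩; exact ⟨h1, h2⟩
      rw [he]
      exact measurableSet_Ioo.inter
        (hg.preimage_isClosed_of_isClosed isClosed_Icc hc).measurableSet
    have hT₂meas : MeasurableSet T₂ := by
      have := hmeas (fun x => |v' x - z₂|) ((hv'c.sub continuousOn_const).abs)
        (Iic η) isClosed_Iic
      exact this
    have hT₃meas : MeasurableSet T₃ := by
      have := hmeas (fun x => |v' x - z₃|) ((hv'c.sub continuousOn_const).abs)
        (Iic η) isClosed_Iic
      exact this
    have hSmeas : MeasurableSet S := by
      have := hmeas v' hv'c (Iic 0) isClosed_Iic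
      exact this
    have hBmeas : MeasurableSet B := by
      have := hmeas (fun x => |v x|) (hvc.abs) (Iic (a*μ/16)) isClosed_Iic
      exact this
    have hfinIoo : volume (Set.Ioo xm xp) < ⊤ := measure_Ioo_lt_top
    have hfin : ∀ (U : Set ℝ), U ⊆ Set.Ioo xm xp → volume U ≠ ⊤ := by
      intro U hU
      exact ((measure_mono hU).trans_lt hfinIoo).ne
    have hT₂sub : T₂ ⊆ Set.Ioo xm xp := fun x hx => hx.1
    have hT₃sub : T₃ ⊆ Set.Ioo xm xp := fun x hx => hx.1
    have hSsub : S ⊆ Set.Ioo xm xp := fun x hx => hx.1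
    -- Step S : volume S small
    have hWvOn : IntegrableOn (fun x => W (v' x)) (Icc (0:ℝ) 1) volume :=
      hWvc.integrableOn_Icc
    have hv'Onn : IntegrableOn v' (Icc (0:ℝ) 1) volume := hv'On
    have hv2On : IntegrableOn (fun x => (v x)^2) (Icc (0:ℝ) 1) volume :=
      hv2c.integrableOn_Icc
    have hvolS : (volume S).toReal ≤ C*ε/c₀ := by
      have hWS : ∀ x ∈ S, c₀*ε ≤ W (v' x) := by
        intro x hx
        have hx' : z₁ + η < v' x := hLint x (hIoosubym hx.1)
        have hx0 : v' x ≤ 0 := hx.2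
        have h1 : c₀ * η ^ q ≤ W (v' x) := by
          refine hWlb (v' x) η hη.le hηη₀.le ?_ ?_ ?_
          · exact le_trans (by linarith only [hx']) (le_abs_self _)
          · exact le_trans (by linarith only [hx0, hη₀z₂, hηη₀]) (neg_le_abs _)
          · exact le_trans (by linarith only [hx0, hη₀z₂, hηη₀, hW.hz₂₃]) (neg_le_abs _)
        have h2 : c₀ * ε ≤ c₀ * η ^ q := mul_le_mul_of_nonneg_left hεη hW.hc₀.le
        linarith only [h1, h2]
      have hconst : IntegrableOn (fun _ : ℝ => c₀*ε) S volume := by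
        refine integrableOn_const ?_
        exact ((measure_mono hSsub).trans_lt hfinIoo).ne
      have h1 : c₀*ε*(volume S).toReal ≤ ∫ x in S, W (v' x) := by
        have := setIntegral_mono_on hconst (hWvOn.mono_set (hSsub.trans hIoosub01))
          hSmeas hWS
        rwa [setIntegral_const, smul_eq_mul, mul_comm] at this
      have h2 : (∫ x in S, W (v' x)) ≤ ∫ x in Ioc (0:ℝ) 1, W (v' x) := by
        refine setIntegral_mono_set (hWvOn.mono_set Ioc_subset_Icc_self)
          (Filter.Eventually.of_forall (fun x => hW.nonneg _))
          (HasSubset.Subset.eventuallyLE (hSsub.trans hIoosubIoc))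
      have h3 : (∫ x in Ioc (0:ℝ) 1, W (v' x)) = ∫ x in (0:ℝ)..1, W (v' x) :=
        (intervalIntegral.integral_of_le (by norm_num)).symm
      have h4 : c₀*ε*(volume S).toReal ≤ C*ε^2 := by
        rw [h3] at h2
        linarith only [h1, h2, hWC]
      have h5 : ε * (c₀ * (volume S).toReal) ≤ ε * (C*ε) := by
        calc ε * (c₀ * (volume S).toReal) = c₀*ε*(volume S).toReal := by ring
          _ ≤ C*ε^2 := h4
          _ = ε * (C*ε) := by ring
      have h6 : c₀ * (volume S).toReal ≤ C*ε := le_of_mul_le_mul_left h5 hε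
      rw [le_div_iff₀ hW.hc₀]
      linarith only [h6]
    -- T and its properties
    set T := T₂ ∪ T₃ with hTdef
    have hTmeas : MeasurableSet T := hT₂meas.union hT₃meas
    have hTsub : T ⊆ Set.Ioo xm xp := union_subset hT₂sub hT₃sub
    have hdisj : Disjoint T₂ T₃ := by
      rw [Set.disjoint_left]
      rintro x ⟨_, h2⟩ ⟨_, h3⟩
      have a2 := abs_le.1 h2
      have a3 := abs_le.1 h3
      linarith only [a2.1, a2.2, a3.1, a3.2, hη₀z₂₃, hηη₀]
    have hvolT : (volume T).toReal = α + β := by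
      rw [hTdef, measure_union hdisj hT₃meas,
        ENNReal.toReal_add (hfin _ hT₂sub) (hfin _ hT₃sub)]
    have hTv' : ∀ x ∈ T, a ≤ v' x := by
      rintro x (⟨_, h2⟩ | ⟨_, h3⟩)
      · have := (abs_le.1 h2).1; simp only [ha]; linarith only [this, hηη₀]
      · have := (abs_le.1 h3).1; simp only [ha]; linarith only [this, hηη₀, hW.hz₂₃]
    have hμαβ : μ ≤ α + β := max_le (by linarith only [hβnn]) (by linarith only [hαnn])
    -- apply TB_bound
    have hBiff : ∀ x, x ∈ Set.Ioo xm xp → (x ∈ B ↔ |v x| ≤ a*μ/16) := by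
      intro x hx
      constructor
      · rintro ⟨_, h⟩; exact h
      · intro h; exact ⟨hx, h⟩
    have hposS : ∀ x, x ∈ Set.Ioo xm xp → x ∉ S → 0 ≤ v' x := by
      intro x hx hxs
      by_contra hneg
      push_neg at hneg
      exact hxs ⟨hx, hneg.le⟩
    have hz₁lb : ∀ x ∈ Set.Ioo xm xp, z₁ ≤ v' x := by
      intro x hx
      have := hLint x (hIoosubym hx)
      linarith only [this, hη]
    have hTBbound := TB_bound v v' z₁ a μ xm xp hxm0 hxp1 hv'Onn hvc hFTCv
      T S B hTmeas hSmeas hBmeas hTsub hSsub hBiff hTv' hposS hz₁lb hapos hμpos hW.hz₁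
    -- Step 4 : T \ B is big
    have hvolTsplit : (volume T).toReal
        = (volume (T ∩ B)).toReal + (volume (T \ B)).toReal := by
      rw [← ENNReal.toReal_add (hfin _ (inter_subset_left.trans hTsub))
        (hfin _ (diff_subset.trans hTsub)), measure_inter_add_diff T hBmeas]
    have hX : (-z₁)*(volume S).toReal/a ≤ μ/8 := by
      have hz₁nn : (0:ℝ) ≤ -z₁ := by linarith only [hW.hz₁]
      have m1 : (-z₁)*(volume S).toReal ≤ (-z₁)*(C*ε/c₀) :=
        mul_le_mul_of_nonneg_left hvolS hz₁nn
      have m2 : (-z₁)*(volume S).toReal/a ≤ (-z₁)*(C*ε/c₀)/a := by gcongr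
      have m3 : (-z₁)*(C*ε/c₀)/a = R₁*ε/8 := by
        rw [hR₁def]
        field_simp [hW.hc₀.ne', hapos.ne']
      rw [m3] at m2
      linarith only [m2, hμR₁]
    have hTnB : 3*μ/4 ≤ (volume (T \ B)).toReal := by
      have h0 := hTBbound
      have h1 : (volume (T \ B)).toReal = (α + β) - (volume (T ∩ B)).toReal := by
        rw [← hvolT, hvolTsplit]; ring
      rw [h1]
      linarith only [hμαβ, hX, h0]
    -- Step 5/6 : energy lower bound
    have hTnBmeas : MeasurableSet (T \ B) := hTmeas.diff hBmeas
    have hTnBsub : T \ B ⊆ Set.Ioo xm xp := diff_subset.trans hTsub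
    have hvsq : ∀ x ∈ T \ B, (a*μ/16)^2 ≤ (v x)^2 := by
      intro x hx
      have hxIoo := hTnBsub hx
      have h1 : ¬ (|v x| ≤ a*μ/16) := fun hc => hx.2 ((hBiff x hxIoo).2 hc)
      push_neg at h1
      calc (a*μ/16)^2 ≤ |v x|^2 := by
            refine pow_le_pow_left₀ (by positivity) h1.le 2
        _ = (v x)^2 := sq_abs _
    have hIocsub01 : Ioc ym yp ⊆ Icc (0:ℝ) 1 := fun x hx =>
      ⟨le_trans hym0 hx.1.le, le_trans hx.2 hyp1⟩
    have henergy1 : (ε^2)⁻¹ * ((a*μ/16)^2 * (3*μ/4)) ≤ ∫ x in ym..yp, F x := by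
      have e1 : (∫ x in ym..yp, (ε^2)⁻¹ * (v x)^2) ≤ ∫ x in ym..yp, F x := by
        refine intervalIntegral.integral_mono_on hymyp.le
          (((hv2c.mono (hsub ym yp hymIcc hypIcc)).intervalIntegrable).const_mul _)
          (hFint ym yp hymIcc hypIcc) (fun x hx => ?_)
        have h1 : 0 ≤ ε^4 * (v'' x)^2 := by positivity
        have h2 : 0 ≤ (ε^2)⁻¹ * W (v' x) := mul_nonneg hε2.le (hW.nonneg _)
        simp only [hFdef]
        linarith only [h1, h2]
      have e2 : (∫ x in ym..yp, (ε^2)⁻¹ * (v x)^2)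
          = (ε^2)⁻¹ * ∫ x in Ioc ym yp, (v x)^2 := by
        rw [intervalIntegral.integral_const_mul, intervalIntegral.integral_of_le hymyp.le]
      have e3 : (∫ x in T \ B, (v x)^2) ≤ ∫ x in Ioc ym yp, (v x)^2 := by
        refine setIntegral_mono_set (hv2On.mono_set hIocsub01)
          (Filter.Eventually.of_forall (fun x => sq_nonneg _))
          (HasSubset.Subset.eventuallyLE (hTnBsub.trans hIoosubIocym))
      have e4 : (a*μ/16)^2 * (volume (T \ B)).toReal ≤ ∫ x in T \ B, (v x)^2 := by
        have hconst : IntegrableOn (fun _ : ℝ => (a*μ/16)^2) (T \ B) volume :=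
          integrableOn_const ((measure_mono hTnBsub).trans_lt hfinIoo).ne
        have := setIntegral_mono_on hconst
          (hv2On.mono_set (hTnBsub.trans hIoosub01)) hTnBmeas hvsq
        rwa [setIntegral_const, smul_eq_mul, mul_comm] at this
      have e5 : (a*μ/16)^2 * (3*μ/4) ≤ (a*μ/16)^2 * (volume (T \ B)).toReal :=
        mul_le_mul_of_nonneg_left hTnB (by positivity)
      have e6 : (ε^2)⁻¹ * ((a*μ/16)^2 * (3*μ/4)) ≤ (ε^2)⁻¹ * ∫ x in Ioc ym yp, (v x)^2 :=
        mul_le_mul_of_nonneg_left (le_trans e5 (le_trans e4 e3)) hε2.le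
      have e7 : (ε^2)⁻¹ * ∫ x in Ioc ym yp, (v x)^2 ≤ ∫ x in ym..yp, F x := by
        rw [← e2]
        exact e1
      exact le_trans e6 e7
    -- Final comparison
    have hs₀sq : (Real.sqrt (A₀+B₀))^2 = A₀+B₀ := Real.sq_sqrt (by linarith only [hA₀, hB₀])
    set s₀ := Real.sqrt (A₀+B₀) with hs₀def
    have hs₀nn : 0 ≤ s₀ := Real.sqrt_nonneg _
    have h1 : 2*(s₀+1)*ε ≤ a*μ/16 := by
      have hmul : a * (R₂ * ε) ≤ a * μ := mul_le_mul_of_nonneg_left hμR₂ hapos.le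
      have heq : a * (R₂ * ε) = 32*(s₀+1)*ε := by
        rw [hR₂def]
        field_simp
      rw [heq] at hmul
      calc 2*(s₀+1)*ε = (32*(s₀+1)*ε)/16 := by ring
        _ ≤ a*μ/16 := by gcongr
    have h2 : (2*(s₀+1)*ε)^2 ≤ (a*μ/16)^2 :=
      pow_le_pow_left₀ (by positivity) h1 2
    have h3 : 4*(A₀+B₀)*ε^2 ≤ (2*(s₀+1)*ε)^2 := by
      have hsq : s₀^2 ≤ (s₀+1)^2 :=
        pow_le_pow_left₀ hs₀nn (by linarith only []) 2
      calc 4*(A₀+B₀)*ε^2 = 4*s₀^2*ε^2 := by rw [hs₀sq]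
        _ ≤ 4*(s₀+1)^2*ε^2 :=
            mul_le_mul_of_nonneg_right
              (mul_le_mul_of_nonneg_left hsq (by norm_num)) (sq_nonneg ε)
        _ = (2*(s₀+1)*ε)^2 := by ring
    have h4 : (A₀+B₀)*μ ≤ (ε^2)⁻¹ * ((a*μ/16)^2 * (3*μ/4)) := by
      have h5 : (ε^2)⁻¹ * ((4*(A₀+B₀)*ε^2) * (3*μ/4)) ≤ (ε^2)⁻¹ * ((a*μ/16)^2 * (3*μ/4)) := by
        refine mul_le_mul_of_nonneg_left (mul_le_mul_of_nonneg_right ?_ (by positivity)) hε2.le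
        linarith only [h2, h3]
      have h6 : (ε^2)⁻¹ * ((4*(A₀+B₀)*ε^2) * (3*μ/4)) = 3*((A₀+B₀)*μ) := by
        have hεne : ε ≠ 0 := hε.ne'
        field_simp
      have h7 : 0 ≤ (A₀+B₀)*μ := mul_nonneg (by linarith only [hA₀, hB₀]) hμpos.le
      linarith only [h5, h6, h7]
    have hchain : A₀ * α + B₀ * β ≤ (A₀ + B₀) * μ := by
      have c1 := mul_le_mul_of_nonneg_left (le_max_left α β) hA₀
      have c2 := mul_le_mul_of_nonneg_left (le_max_right α β) hB₀
      have c3 : (A₀+B₀)*μ = A₀*μ + B₀*μ := by ring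
      simp only [hμdef] at c3 ⊢
      linarith only [c1, c2, c3]
    calc A₀ * α + B₀ * β ≤ (A₀ + B₀) * μ := hchain
      _ ≤ (ε^2)⁻¹ * ((a*μ/16)^2 * (3*μ/4)) := h4
      _ ≤ ∫ x in ym..yp, F x := henergy1

  · -- SMALL branch
    have hxmIcc : xm ∈ Icc (0:ℝ) 1 := ⟨hxm0.le, by linarith⟩
    have hymxmsub : Icc ym xm ⊆ Icc (0:ℝ) 1 := Icc_subset_Icc hym0 (by linarith)
    have hv'cyx : ContinuousOn v' (Icc ym xm) := hv'c.mono hymxmsub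
    have hends : z₁ + η ≤ z₂ - η₀ ∧ z₂ - η₀ ≤ z₂ - η ∧ z₁ + η ≤ z₁ + η₀ ∧ z₁ + η₀ ≤ z₂ - η₀ := by
      constructor
      · linarith
      constructor
      · linarith
      constructor
      · linarith
      · linarith
    set Sc := Icc ym xm ∩ v' ⁻¹' {z₂ - η₀} with hScdef
    have hScclosed : IsClosed Sc :=
      hv'cyx.preimage_isClosed_of_isClosed isClosed_Icc isClosed_singleton
    have hScne : Sc.Nonempty := by
      have : z₂ - η₀ ∈ Icc (v' ym) (v' xm) := by rw [hApa, hApb]; exact ⟨hends.1, hends.2.1⟩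
      obtain ⟨x, hx, hvx⟩ := intermediate_value_Icc hymxm.le hv'cyx this
      exact ⟨x, hx, hvx⟩
    have hScbdd : BddBelow Sc := (bddBelow_Icc : BddBelow (Icc ym xm)).mono inter_subset_left
    set t := sInf Sc with htdef
    have htmem : t ∈ Sc := hScclosed.csInf_mem hScne hScbdd
    have htIccym : t ∈ Icc ym xm := htmem.1
    have hv't : v' t = z₂ - η₀ := htmem.2
    have hupper : ∀ x ∈ Icc ym t, v' x ≤ z₂ - η₀ := by
      intro x hx
      by_contra hlt
      push_neg at hlt
      have hxIcc : x ∈ Icc ym xm := ⟨hx.1, le_trans hx.2 htIccym.2⟩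
      have : z₂ - η₀ ∈ Icc (v' ym) (v' x) := by rw [hApa]; exact ⟨hends.1, hlt.le⟩
      obtain ⟨x₁, hx₁, hvx₁⟩ := intermediate_value_Icc hx.1
        (hv'cyx.mono (Icc_subset_Icc le_rfl hxIcc.2)) this
      have hx₁Sc : x₁ ∈ Sc := ⟨⟨hx₁.1, le_trans hx₁.2 hxIcc.2⟩, hvx₁⟩
      have h1 : t ≤ x₁ := csInf_le hScbdd hx₁Sc
      have h2 : x₁ ≤ x := hx₁.2
      have : x = t := le_antisymm hx.2 (le_trans h1 h2)
      rw [this, hv't] at hlt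
      exact lt_irrefl _ hlt
    set Sc2 := Icc ym t ∩ v' ⁻¹' {z₁ + η₀} with hSc2def
    have hSc2closed : IsClosed Sc2 :=
      (hv'cyx.mono (Icc_subset_Icc le_rfl htIccym.2)).preimage_isClosed_of_isClosed
        isClosed_Icc isClosed_singleton
    have hSc2ne : Sc2.Nonempty := by
      have : z₁ + η₀ ∈ Icc (v' ym) (v' t) := by
        rw [hApa, hv't]; exact ⟨hends.2.2.1, hends.2.2.2⟩
      obtain ⟨x, hx, hvx⟩ := intermediate_value_Icc htIccym.1
        (hv'cyx.mono (Icc_subset_Icc le_rfl htIccym.2)) this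
      exact ⟨x, hx, hvx⟩
    have hSc2bdd : BddAbove Sc2 := (bddAbove_Icc (a := ym) (b := t)).mono inter_subset_left
    set sx := sSup Sc2 with hsxdef
    have hsmem : sx ∈ Sc2 := hSc2closed.csSup_mem hSc2ne hSc2bdd
    have hsIccym : sx ∈ Icc ym t := hsmem.1
    have hv's : v' sx = z₁ + η₀ := hsmem.2
    have hst : sx < t := by
      rcases lt_or_eq_of_le hsIccym.2 with h | h
      · exact h
      · exfalso; rw [h] at hv's; rw [hv's] at hv't; linarith
    have hlower : ∀ x ∈ Icc sx t, z₁ + η₀ ≤ v' x := by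
      intro x hx
      by_contra hlt
      push_neg at hlt
      have hxt : x < t := by
        rcases lt_or_eq_of_le hx.2 with h | h
        · exact h
        · exfalso; rw [h, hv't] at hlt; linarith
      have hxIcc : x ∈ Icc ym xm := ⟨le_trans hsIccym.1 hx.1, le_trans hx.2 htIccym.2⟩
      have : z₁ + η₀ ∈ Icc (v' x) (v' t) := by rw [hv't]; exact ⟨hlt.le, hends.2.2.2⟩
      obtain ⟨x₁, hx₁, hvx₁⟩ := intermediate_value_Icc hxt.le
        (hv'cyx.mono (Icc_subset_Icc hxIcc.1 htIccym.2)) this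
      have hx₁Sc2 : x₁ ∈ Sc2 := ⟨⟨le_trans hxIcc.1 hx₁.1, hx₁.2⟩, hvx₁⟩
      have h1 : x₁ ≤ sx := le_csSup hSc2bdd hx₁Sc2
      have hsx : sx < x := by
        rcases lt_or_eq_of_le hx.1 with h | h
        · exact h
        · exfalso; rw [← h, hv's] at hlt; linarith
      linarith [hx₁.1]
    have hsIcc01 : sx ∈ Icc (0:ℝ) 1 := hymxmsub ⟨hsIccym.1, le_trans hsIccym.2 htIccym.2⟩
    have htIcc01 : t ∈ Icc (0:ℝ) 1 := hymxmsub htIccym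
    -- energy over [sx,t]
    have hΔint : (∫ x in sx..t, v'' x) = Δ := by
      rw [hFTCv' sx t hsIcc01 htIcc01, hv't, hv's]; simp only [hΔdef]; ring
    have hv''sx : IntervalIntegrable v'' volume sx t := hv''int.mono_set
      (by rw [uIcc_of_le (by norm_num : (0:ℝ)≤1)]; exact hsub sx t hsIcc01 htIcc01)
    have hv''2sx : IntervalIntegrable (fun x => (v'' x)^2) volume sx t := hv''2int.mono_set
      (by rw [uIcc_of_le (by norm_num : (0:ℝ)≤1)]; exact hsub sx t hsIcc01 htIcc01)
    have hQ : Δ^2/(t - sx) ≤ ∫ x in sx..t, (v'' x)^2 := by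
      have := cs_aux hst hv''sx hv''2sx
      rwa [hΔint] at this
    have hWl : ∀ x ∈ Icc sx t, w₀ ≤ W (v' x) := by
      intro x hx
      refine hWlb (v' x) η₀ hW.hη₀pos.le le_rfl ?_ ?_ ?_
      · have h1 := hlower x hx
        exact le_trans (by linarith) (le_abs_self _)
      · have h2 := hupper x ⟨le_trans hsIccym.1 hx.1, hx.2⟩
        exact le_trans (by linarith) (neg_le_abs _)
      · have h2 := hupper x ⟨le_trans hsIccym.1 hx.1, hx.2⟩
        exact le_trans (by linarith) (neg_le_abs _)
    have hWcont : IntervalIntegrable (fun x => W (v' x)) volume sx t :=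
      (hWvc.mono (hsub sx t hsIcc01 htIcc01)).intervalIntegrable
    have hintW : w₀ * (t - sx) ≤ ∫ x in sx..t, W (v' x) := by
      have := intervalIntegral.integral_mono_on hst.le intervalIntegrable_const hWcont hWl
      rwa [intervalIntegral.integral_const, smul_eq_mul, mul_comm] at this
    have hv2sx : IntervalIntegrable (fun x => (v x)^2) volume sx t :=
      (hv2c.mono (hsub sx t hsIcc01 htIcc01)).intervalIntegrable
    have hsplit : (∫ x in sx..t, F x) =
        ε^4 * (∫ x in sx..t, (v'' x)^2) + (ε^2)⁻¹ * (∫ x in sx..t, W (v' x))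
          + (ε^2)⁻¹ * (∫ x in sx..t, (v x)^2) := by
      simp only [hFdef]
      rw [intervalIntegral.integral_add ((hv''2sx.const_mul _).add (hWcont.const_mul _))
        (hv2sx.const_mul _),
        intervalIntegral.integral_add (hv''2sx.const_mul _) (hWcont.const_mul _),
        intervalIntegral.integral_const_mul, intervalIntegral.integral_const_mul,
        intervalIntegral.integral_const_mul]
    have hv2nn : 0 ≤ ∫ x in sx..t, (v x)^2 :=
      intervalIntegral.integral_nonneg hst.le (fun x _ => sq_nonneg _)
    have hloc : 2*ε*Δ*Real.sqrt w₀ ≤ ∫ x in sx..t, F x := by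
      have hl : (0:ℝ) < t - sx := by linarith
      have hA : 0 ≤ ε^4 * (Δ^2/(t-sx)) := by positivity
      have hB : 0 ≤ (ε^2)⁻¹ * (w₀*(t-sx)) := by positivity
      have hamgm := amgm_aux hA hB
      have hprod : (ε^4 * (Δ^2/(t-sx))) * ((ε^2)⁻¹ * (w₀*(t-sx))) = (ε*Δ)^2 * w₀ := by
        field_simp
      rw [hprod] at hamgm
      rw [Real.sqrt_mul (by positivity) w₀, Real.sqrt_sq (by positivity)] at hamgm
      have e1 : ε^4 * (Δ^2/(t-sx)) ≤ ε^4 * ∫ x in sx..t, (v'' x)^2 :=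
        mul_le_mul_of_nonneg_left hQ (by positivity)
      have e2 : (ε^2)⁻¹ * (w₀*(t-sx)) ≤ (ε^2)⁻¹ * ∫ x in sx..t, W (v' x) :=
        mul_le_mul_of_nonneg_left hintW hε2.le
      have e3 : 0 ≤ (ε^2)⁻¹ * ∫ x in sx..t, (v x)^2 := mul_nonneg hε2.le hv2nn
      rw [hsplit]
      calc 2*ε*Δ*Real.sqrt w₀ = 2*(ε*Δ*Real.sqrt w₀) := by ring
        _ ≤ ε^4 * (Δ^2/(t-sx)) + (ε^2)⁻¹ * (w₀*(t-sx)) := hamgm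
        _ ≤ _ := by linarith
    have henergy : 2*ε*Δ*Real.sqrt w₀ ≤ ∫ x in ym..yp, F x :=
      le_trans hloc (hrestrict sx t hsIccym.1 hst.le (by linarith [htIccym.2, hxmxp, hxpyp]))
    -- conclude
    set α := (volume {x : ℝ | x ∈ Set.Ioo xm xp ∧ |v' x - z₂| ≤ η}).toReal with hαdef
    set β := (volume {x : ℝ | x ∈ Set.Ioo xm xp ∧ |v' x - z₃| ≤ η}).toReal with hβdef
    have hαnn : 0 ≤ α := ENNReal.toReal_nonneg
    have hβnn : 0 ≤ β := ENNReal.toReal_nonneg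
    have hαμ : α ≤ max α β := le_max_left _ _
    have hβμ : β ≤ max α β := le_max_right _ _
    have hchain : A₀ * α + B₀ * β ≤ (A₀ + B₀) * (max α β) := by
      have h1 := mul_le_mul_of_nonneg_left hαμ hA₀
      have h2 := mul_le_mul_of_nonneg_left hβμ hB₀
      have h3 : (A₀+B₀)*(max α β) = A₀*(max α β) + B₀*(max α β) := by ring
      linarith
    have hchain2 : (A₀ + B₀) * (max α β) ≤ (A₀+B₀) * (2*Δ*Real.sqrt w₀/(A₀+B₀+1) * ε) :=
      mul_le_mul_of_nonneg_left hsmall (by linarith)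
    have hchain3 : (A₀+B₀) * (2*Δ*Real.sqrt w₀/(A₀+B₀+1) * ε) ≤ 2*ε*Δ*Real.sqrt w₀ := by
      have hd : (0:ℝ) < A₀+B₀+1 := by linarith
      have hG : 0 ≤ 2*Δ*Real.sqrt w₀ * ε := by positivity
      have key : (A₀+B₀) * (2*Δ*Real.sqrt w₀/(A₀+B₀+1) * ε)
          = (2*Δ*Real.sqrt w₀*ε) * ((A₀+B₀)/(A₀+B₀+1)) := by ring
      rw [key]
      have hle1 : (A₀+B₀)/(A₀+B₀+1) ≤ 1 := by
        rw [div_le_one hd]; linarith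
      calc (2*Δ*Real.sqrt w₀*ε) * ((A₀+B₀)/(A₀+B₀+1)) ≤ (2*Δ*Real.sqrt w₀*ε) * 1 :=
            mul_le_mul_of_nonneg_left hle1 hG
        _ = 2*ε*Δ*Real.sqrt w₀ := by ring
    calc A₀ * α + B₀ * β ≤ 2*ε*Δ*Real.sqrt w₀ :=
          le_trans hchain (le_trans hchain2 hchain3)
      _ ≤ ∫ x in ym..yp, F x := henergy
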